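/- Let n ≥ 1, p > 1, a > 0, and let g_a(x) = e^{−a|x|²/2}. Then for every x ∈ ℝⁿ, as t → +∞, (1 + (at)²)^{n(p−1)/4} · e^{i(t/2)|x|²} · 𝓕(|U(t)g_a|^{p−1} U(t)g_a)(x) converges to a^{−n/2} e^{−p|x|²/(2a)}. Equivalently, e^{i(t/2)|x|²} 𝓕(|U(t)g_a|^{p−1} U(t)g_a)(x) is asymptotically equivalent, as t → +∞, to (1 + (at)²)^{−n(p−1)/4} a^{−n/2} e^{−p|x|²/(2a)}. -/

import Mathlib

open MeasureTheory Real Complex Filter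
open scoped RealInnerProductSpace ENNReal Topology

noncomputable section

/-- `ℝⁿ` as a Euclidean space. -/
abbrev Rn (n : ℕ) := EuclideanSpace ℝ (Fin n)

/-- The Fourier transform `𝓕 f (ξ) = (2π)^{-n/2} ∫ f(x) e^{-i x·ξ} dx`. -/
def FT (n : ℕ) (f : Rn n → ℂ) (ξ : Rn n) : ℂ :=
  (((2 * π) ^ (-(n : ℝ) / 2) : ℝ) : ℂ) *
    ∫ x : Rn n, f x * Complex.exp (-(Complex.I * ((⟪x, ξ⟫ : ℝ) : ℂ)))

/-- The inverse Fourier transform. -/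
def FTinv (n : ℕ) (f : Rn n → ℂ) (x : Rn n) : ℂ :=
  (((2 * π) ^ (-(n : ℝ) / 2) : ℝ) : ℂ) *
    ∫ ξ : Rn n, f ξ * Complex.exp (Complex.I * ((⟪x, ξ⟫ : ℝ) : ℂ))

/-- The free Schrödinger group `U(t) = e^{i(t/2)Δ}`, defined on the Fourier side by
`𝓕(U(t)f)(ξ) = e^{-i(t/2)|ξ|²} 𝓕f(ξ)`. -/
def Ugrp (n : ℕ) (t : ℝ) (f : Rn n → ℂ) : Rn n → ℂ :=
  FTinv n fun ξ => Complex.exp (-(Complex.I * ((t / 2 : ℝ) : ℂ) * ((‖ξ‖ ^ 2 : ℝ) : ℂ))) * FT n f ξ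

/-- The nonlinearity `f ↦ |f|^{p-1} f`. -/
def nlin (p : ℝ) {n : ℕ} (f : Rn n → ℂ) (x : Rn n) : ℂ :=
  ((‖f x‖ ^ (p - 1) : ℝ) : ℂ) * f x

/-- `δ(r) = n/2 - n/r`. -/
def sdelta (n : ℕ) (r : ℝ) : ℝ := n / 2 - n / r

/-- The integrand `e^{i(t/2)|ξ|²} 𝓕(|U(t)φ|^{p-1}U(t)φ)(ξ)`. -/
def lhsInt (n : ℕ) (p : ℝ) (φ : Rn n → ℂ) (t : ℝ) (ξ : Rn n) : ℂ :=
  Complex.exp (Complex.I * ((t / 2 : ℝ) : ℂ) * ((‖ξ‖ ^ 2 : ℝ) : ℂ)) *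
    FT n (nlin p (Ugrp n t φ)) ξ

/-- The integrand `|t|^{n(p-1)/2-2} U(t)(|U(-t)𝓕φ|^{p-1}U(-t)𝓕φ)(ξ)`. -/
def rhsInt (n : ℕ) (p : ℝ) (φ : Rn n → ℂ) (t : ℝ) (ξ : Rn n) : ℂ :=
  ((|t| ^ ((n : ℝ) * (p - 1) / 2 - 2) : ℝ) : ℂ) *
    Ugrp n t (nlin p (Ugrp n (-t) (FT n φ))) ξ

/-- The same integrand without the power of `t` (for `p = 1 + 4/n` the power vanishes). -/
def rhsInt0 (n : ℕ) (p : ℝ) (φ : Rn n → ℂ) (t : ℝ) (ξ : Rn n) : ℂ :=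
  Ugrp n t (nlin p (Ugrp n (-t) (FT n φ))) ξ

/-- The Gaussian `g_a(x) = e^{-a|x|²/2}`. -/
def gauss (n : ℕ) (a : ℝ) (x : Rn n) : ℂ :=
  Complex.exp (-((a * ‖x‖ ^ 2 / 2 : ℝ) : ℂ))

end

/-! ### Auxiliary development -/
noncomputable section Aux

/-- `(2π)^{-n/2}` as a complex number. -/
def Pc (n : ℕ) : ℂ := (((2 * π) ^ (-(n : ℝ) / 2) : ℝ) : ℂ)

/-- `(2π/z)^{n/2}`. -/
def Qc (n : ℕ) (z : ℂ) : ℂ := (2 * (π : ℂ) / z) ^ ((n : ℂ) / 2)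

/-- `c(t) = 1/a + it`. -/
def cc (a t : ℝ) : ℂ := ((a⁻¹ : ℝ) : ℂ) + (t : ℂ) * Complex.I

/-- `b(t) = (p-1)·Re(c(t)⁻¹) + c(t)⁻¹`. -/
def bb (p a t : ℝ) : ℂ := (((p - 1) * ((cc a t)⁻¹).re : ℝ) : ℂ) + (cc a t)⁻¹

lemma cc_re (a t : ℝ) : (cc a t).re = a⁻¹ := by simp [cc]

lemma cc_im (a t : ℝ) : (cc a t).im = t := by simp [cc]

lemma cc_re_pos {a : ℝ} (ha : 0 < a) (t : ℝ) : 0 < (cc a t).re := by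
  rw [cc_re]; exact inv_pos.2 ha

lemma cc_ne {a : ℝ} (ha : 0 < a) (t : ℝ) : cc a t ≠ 0 := by
  intro h
  have := cc_re_pos ha t
  rw [h] at this; simp at this

lemma normSq_cc (a t : ℝ) : Complex.normSq (cc a t) = a⁻¹ ^ 2 + t ^ 2 := by
  rw [Complex.normSq_apply, cc_re, cc_im]; ring

lemma cc_inv_re {a : ℝ} (t : ℝ) :
    ((cc a t)⁻¹).re = a⁻¹ / (a⁻¹ ^ 2 + t ^ 2) := by
  rw [Complex.inv_re, cc_re, normSq_cc]

lemma cc_inv_re_pos {a : ℝ} (ha : 0 < a) (t : ℝ) : 0 < ((cc a t)⁻¹).re := by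
  rw [cc_inv_re]
  have h2 : 0 < a⁻¹ ^ 2 + t ^ 2 := by positivity
  exact div_pos (inv_pos.2 ha) h2

lemma bb_re (p a t : ℝ) : (bb p a t).re = (p - 1) * ((cc a t)⁻¹).re + ((cc a t)⁻¹).re := by
  simp [bb]

lemma bb_re_pos {p a : ℝ} (hp : 1 < p) (ha : 0 < a) (t : ℝ) : 0 < (bb p a t).re := by
  rw [bb_re]
  have h1 := cc_inv_re_pos ha t
  nlinarith

lemma bb_ne {p a : ℝ} (hp : 1 < p) (ha : 0 < a) (t : ℝ) : bb p a t ≠ 0 := by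
  intro h
  have := bb_re_pos hp ha t
  rw [h] at this; simp at this

lemma mul_cpow_of_re_pos {z w : ℂ} (hz : 0 < z.re) (hw : 0 < w.re) (s : ℂ) :
    (z * w) ^ s = z ^ s * w ^ s := by
  have hz0 : z ≠ 0 := fun h => by simp [h] at hz
  have hw0 : w ≠ 0 := fun h => by simp [h] at hw
  have haz : |Complex.arg z| < π / 2 := Complex.abs_arg_lt_pi_div_two_iff.2 (Or.inl hz)
  have haw : |Complex.arg w| < π / 2 := Complex.abs_arg_lt_pi_div_two_iff.2 (Or.inl hw)
  have harg : Complex.arg z + Complex.arg w ∈ Set.Ioc (-π) π := by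
    constructor
    · nlinarith [abs_lt.1 haz, abs_lt.1 haw, Real.pi_pos]
    · nlinarith [abs_lt.1 haz, abs_lt.1 haw, Real.pi_pos]
  rw [Complex.cpow_def_of_ne_zero (mul_ne_zero hz0 hw0),
    Complex.cpow_def_of_ne_zero hz0, Complex.cpow_def_of_ne_zero hw0,
    Complex.log_mul hz0 hw0 harg, add_mul, Complex.exp_add]

lemma integral_gauss (n : ℕ) {b : ℂ} (hb : 0 < b.re) (c : ℂ) (w : Rn n) :
    ∫ x : Rn n, Complex.exp (-(b / 2) * ((‖x‖ ^ 2 : ℝ) : ℂ) + c * ((⟪x, w⟫ : ℝ) : ℂ)) =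
      (2 * π / b) ^ ((n : ℂ) / 2) * Complex.exp (c ^ 2 * ((‖w‖ ^ 2 : ℝ) : ℂ) / (2 * b)) := by
  have hb2 : 0 < (b / 2).re := by simpa using by positivity
  have hbne : b ≠ 0 := fun h => by simp [h] at hb
  have := GaussianFourier.integral_cexp_neg_mul_sq_norm_add (V := Rn n) hb2 c w
  rw [finrank_euclideanSpace_fin] at this
  rw [show (fun x : Rn n => Complex.exp (-(b/2) * ((‖x‖^2:ℝ):ℂ) + c * ((⟪x,w⟫:ℝ):ℂ)))
      = fun x : Rn n => Complex.exp (-(b/2) * (‖x‖:ℂ)^2 + c * ((⟪w,x⟫:ℝ):ℂ)) from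
      funext fun x => by rw [real_inner_comm]; push_cast; ring_nf]
  rw [this]
  have h1 : 2 * (π : ℂ) / b = π / (b/2) := by field_simp
  have h2 : c ^ 2 * ((‖w‖^2:ℝ):ℂ) / (2 * b) = c^2 * ((‖w‖:ℂ))^2 / (4 * (b/2)) := by
    push_cast; ring
  rw [h1, h2]

lemma FT_K_gauss (n : ℕ) (K : ℂ) {b : ℂ} (hb : 0 < b.re) (ξ : Rn n) :
    FT n (fun x => K * Complex.exp (-(b / 2) * ((‖x‖ ^ 2 : ℝ) : ℂ))) ξ
      = K * (Pc n * Qc n b * Complex.exp (-((‖ξ‖ ^ 2 : ℝ) : ℂ) / (2 * b))) := by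
  unfold FT Pc Qc
  rw [show (fun x : Rn n => (K * Complex.exp (-(b/2) * ((‖x‖^2:ℝ):ℂ))) *
        Complex.exp (-(Complex.I * ((⟪x,ξ⟫:ℝ):ℂ))))
      = fun x : Rn n => K * Complex.exp (-(b/2) * ((‖x‖^2:ℝ):ℂ) + (-Complex.I) * ((⟪x,ξ⟫:ℝ):ℂ)) from
      funext fun x => by rw [mul_assoc, ← Complex.exp_add]; ring_nf]
  rw [integral_const_mul, integral_gauss n hb (-Complex.I) ξ]
  rw [show (-Complex.I)^2 = -1 by rw [neg_sq, Complex.I_sq]]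
  rw [show (-1 : ℂ) * ((‖ξ‖^2:ℝ):ℂ) / (2*b) = -((‖ξ‖^2:ℝ):ℂ)/(2*b) by ring]
  ring

lemma FTinv_K_gauss (n : ℕ) (K : ℂ) {b : ℂ} (hb : 0 < b.re) (x : Rn n) :
    FTinv n (fun ξ => K * Complex.exp (-(b / 2) * ((‖ξ‖ ^ 2 : ℝ) : ℂ))) x
      = K * (Pc n * Qc n b * Complex.exp (-((‖x‖ ^ 2 : ℝ) : ℂ) / (2 * b))) := by
  unfold FTinv Pc Qc
  rw [show (fun ξ : Rn n => (K * Complex.exp (-(b/2) * ((‖ξ‖^2:ℝ):ℂ))) *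
        Complex.exp (Complex.I * ((⟪x,ξ⟫:ℝ):ℂ)))
      = fun ξ : Rn n => K * Complex.exp (-(b/2) * ((‖ξ‖^2:ℝ):ℂ) + Complex.I * ((⟪ξ,x⟫:ℝ):ℂ)) from
      funext fun ξ => by rw [real_inner_comm ξ x, mul_assoc, ← Complex.exp_add]]
  rw [integral_const_mul, integral_gauss n hb Complex.I x]
  rw [Complex.I_sq]
  rw [show (-1 : ℂ) * ((‖x‖^2:ℝ):ℂ) / (2*b) = -((‖x‖^2:ℝ):ℂ)/(2*b) by ring]
  ring

lemma FT_gauss (n : ℕ) {a : ℝ} (ha : 0 < a) (ξ : Rn n) :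
    FT n (gauss n a) ξ = Pc n * Qc n (a : ℂ) * Complex.exp (-((‖ξ‖^2 : ℝ):ℂ) / (2 * (a:ℂ))) := by
  have hre : 0 < ((a : ℂ)).re := by simpa using ha
  rw [show gauss n a = fun x : Rn n => (1:ℂ) * Complex.exp (-((a:ℂ)/2) * ((‖x‖^2:ℝ):ℂ)) from
    funext fun x => by unfold gauss; push_cast; ring_nf]
  rw [FT_K_gauss n 1 hre ξ, one_mul]

lemma Ugrp_gauss (n : ℕ) {a : ℝ} (ha : 0 < a) (t : ℝ) (x : Rn n) :
    Ugrp n t (gauss n a) x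
      = Pc n ^ 2 * Qc n (a : ℂ) * Qc n (cc a t) *
        Complex.exp (-((‖x‖ ^ 2 : ℝ) : ℂ) / (2 * cc a t)) := by
  unfold Ugrp
  rw [show (fun ξ : Rn n => Complex.exp (-(Complex.I * ((t/2:ℝ):ℂ) * ((‖ξ‖^2:ℝ):ℂ))) *
        FT n (gauss n a) ξ)
      = fun ξ : Rn n => (Pc n * Qc n (a:ℂ)) * Complex.exp (-(cc a t / 2) * ((‖ξ‖^2:ℝ):ℂ)) from
      funext fun ξ => by
        rw [FT_gauss n ha ξ, mul_comm, mul_assoc, ← Complex.exp_add]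
        congr 1
        unfold cc
        push_cast
        ring]
  rw [FTinv_K_gauss n _ (cc_re_pos ha t) x]
  ring

/-- The constant in `U(t)g_a`. -/
def Kc (n : ℕ) (a t : ℝ) : ℂ := Pc n ^ 2 * Qc n (a : ℂ) * Qc n (cc a t)

lemma nlin_Ugrp (n : ℕ) (p : ℝ) {a : ℝ} (ha : 0 < a) (t : ℝ) (x : Rn n) :
    nlin p (Ugrp n t (gauss n a)) x
      = ((‖Kc n a t‖ ^ (p - 1) : ℝ) : ℂ) * Kc n a t *
        Complex.exp (-(bb p a t / 2) * ((‖x‖ ^ 2 : ℝ) : ℂ)) := by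
  unfold nlin
  rw [show Ugrp n t (gauss n a) x = Kc n a t * Complex.exp (-((‖x‖^2:ℝ):ℂ) / (2 * cc a t)) from
    by rw [Ugrp_gauss n ha t x]; unfold Kc; ring]
  set z : ℂ := -((‖x‖^2:ℝ):ℂ) / (2 * cc a t) with hzdef
  have hzre : z.re = -(‖x‖^2) / 2 * ((cc a t)⁻¹).re := by
    rw [show z = ((-(‖x‖^2) / 2 : ℝ) : ℂ) * (cc a t)⁻¹ from by rw [hzdef]; push_cast; ring]
    rw [Complex.re_ofReal_mul]
  rw [norm_mul, Complex.norm_exp,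
    Real.mul_rpow (norm_nonneg _) (Real.exp_nonneg _), ← Real.exp_mul]
  push_cast [Complex.ofReal_exp]
  rw [show ((‖Kc n a t‖ ^ (p-1) : ℝ) : ℂ) * Complex.exp ((z.re : ℂ) * ((p:ℂ) - 1)) *
        (Kc n a t * Complex.exp z)
      = ((‖Kc n a t‖ ^ (p-1) : ℝ) : ℂ) * Kc n a t *
        (Complex.exp ((z.re : ℂ) * ((p:ℂ) - 1)) * Complex.exp z) from by ring,
    ← Complex.exp_add]
  congr 2
  rw [hzre, hzdef]
  unfold bb
  push_cast
  ring

lemma FT_nlin (n : ℕ) {p a : ℝ} (hp : 1 < p) (ha : 0 < a) (t : ℝ) (x : Rn n) :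
    FT n (nlin p (Ugrp n t (gauss n a))) x
      = ((‖Kc n a t‖ ^ (p - 1) : ℝ) : ℂ) * Kc n a t *
        (Pc n * Qc n (bb p a t) * Complex.exp (-((‖x‖ ^ 2 : ℝ) : ℂ) / (2 * bb p a t))) := by
  rw [show nlin p (Ugrp n t (gauss n a))
      = fun y : Rn n => (((‖Kc n a t‖ ^ (p - 1) : ℝ) : ℂ) * Kc n a t) *
          Complex.exp (-(bb p a t / 2) * ((‖y‖ ^ 2 : ℝ) : ℂ)) from
    funext fun y => by rw [nlin_Ugrp n p ha t y]]
  rw [FT_K_gauss n _ (bb_re_pos hp ha t) x]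

lemma Qc_ofReal (n : ℕ) {r : ℝ} (hr : 0 < r) :
    Qc n (r : ℂ) = (((2 * π / r) ^ ((n : ℝ) / 2) : ℝ) : ℂ) := by
  unfold Qc
  rw [show 2 * (π:ℂ) / (r:ℂ) = (((2 * π / r : ℝ)):ℂ) from by push_cast; ring,
    show ((n:ℂ)/2) = (((n:ℝ)/2 : ℝ):ℂ) from by push_cast; ring,
    ← Complex.ofReal_cpow (by positivity)]

lemma norm_Pc (n : ℕ) : ‖Pc n‖ = (2 * π) ^ (-(n:ℝ)/2) := by
  unfold Pc
  rw [Complex.norm_real, Real.norm_eq_abs,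
    _root_.abs_of_nonneg (Real.rpow_nonneg (le_of_lt Real.two_pi_pos) _)]

lemma norm_Qc_ofReal (n : ℕ) {r : ℝ} (hr : 0 < r) :
    ‖Qc n (r : ℂ)‖ = (2 * π / r) ^ ((n:ℝ)/2) := by
  rw [Qc_ofReal n hr, Complex.norm_real, Real.norm_eq_abs,
    _root_.abs_of_nonneg (Real.rpow_nonneg (by positivity) _)]

lemma norm_Qc (n : ℕ) (z : ℂ) :
    ‖Qc n z‖ = (2 * π / ‖z‖) ^ ((n:ℝ)/2) := by
  unfold Qc
  rw [show ((n:ℂ)/2) = (((n:ℝ)/2 : ℝ):ℂ) from by push_cast; ring,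
    Complex.norm_cpow_real, norm_div,
    show 2 * (π:ℂ) = ((2*π : ℝ):ℂ) from by push_cast; ring,
    Complex.norm_real, Real.norm_eq_abs, abs_of_pos Real.two_pi_pos]

lemma abs_cc_pos {a : ℝ} (ha : 0 < a) (t : ℝ) : 0 < ‖cc a t‖ :=
  norm_pos_iff.mpr (cc_ne ha t)

lemma sq_abs_cc (a t : ℝ) : (‖cc a t‖) ^ 2 = a⁻¹ ^ 2 + t ^ 2 := by
  rw [Complex.sq_norm, normSq_cc]

lemma norm_Kc (n : ℕ) {a : ℝ} (ha : 0 < a) (t : ℝ) :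
    ‖Kc n a t‖ = (a * ‖cc a t‖) ^ (-((n:ℝ)/2)) := by
  have h2π := Real.two_pi_pos
  have hM : 0 < ‖cc a t‖ := abs_cc_pos ha t
  set M := ‖cc a t‖
  unfold Kc
  rw [norm_mul, norm_mul, norm_pow, norm_Pc, norm_Qc_ofReal n ha, norm_Qc]
  rw [← Real.rpow_natCast ((2*π:ℝ)^(-(n:ℝ)/2)) 2, ← Real.rpow_mul h2π.le]
  rw [Real.rpow_def_of_pos h2π, Real.rpow_def_of_pos (by positivity : (0:ℝ) < 2*π/a),
    Real.rpow_def_of_pos (by positivity : (0:ℝ) < 2*π/M),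
    Real.rpow_def_of_pos (by positivity : (0:ℝ) < a*M),
    ← Real.exp_add, ← Real.exp_add]
  congr 1
  rw [Real.log_div (ne_of_gt h2π) (ne_of_gt ha), Real.log_div (ne_of_gt h2π) (ne_of_gt hM),
    Real.log_mul (ne_of_gt ha) (ne_of_gt hM)]
  push_cast
  ring

lemma R_mul_normKc {n : ℕ} {p a : ℝ} (ha : 0 < a) (t : ℝ) :
    ((1 + (a*t)^2) ^ ((n:ℝ)*(p-1)/4) : ℝ) * ‖Kc n a t‖ ^ (p-1) = 1 := by
  rw [norm_Kc n ha t]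
  have hM : 0 < ‖cc a t‖ := abs_cc_pos ha t
  have hu : 0 < a * ‖cc a t‖ := mul_pos ha hM
  have h1 : (1 + (a*t)^2 : ℝ) = (a * ‖cc a t‖)^2 := by
    rw [show (a * ‖cc a t‖)^2 = a^2 * ‖cc a t‖^2 from by ring,
      sq_abs_cc]
    field_simp
  rw [h1, ← Real.rpow_natCast (a * ‖cc a t‖) 2, ← Real.rpow_mul hu.le, ← Real.rpow_mul hu.le,
    ← Real.rpow_add hu]
  rw [show (2:ℕ) * ((n:ℝ)*(p-1)/4) + -((n:ℝ)/2) * (p-1) = 0 from by push_cast; ring,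
    Real.rpow_zero]

lemma Kc_mul_Pc (n : ℕ) {a : ℝ} (ha : 0 < a) (t : ℝ) :
    Kc n a t * Pc n
      = ((a ^ (-(n:ℝ)/2) : ℝ) : ℂ) * (((2*π) ^ (-(n:ℝ)) : ℝ) : ℂ) * Qc n (cc a t) := by
  have h2π := Real.two_pi_pos
  have hreal : ((2*π:ℝ)^(-(n:ℝ)/2))^3 * (2*π/a)^((n:ℝ)/2)
      = a^(-(n:ℝ)/2) * (2*π)^(-(n:ℝ)) := by
    rw [← Real.rpow_natCast ((2*π:ℝ)^(-(n:ℝ)/2)) 3, ← Real.rpow_mul h2π.le,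
      Real.rpow_def_of_pos h2π, Real.rpow_def_of_pos (by positivity : (0:ℝ) < 2*π/a),
      Real.rpow_def_of_pos ha, Real.rpow_def_of_pos h2π, ← Real.exp_add, ← Real.exp_add]
    congr 1
    rw [Real.log_div (ne_of_gt h2π) (ne_of_gt ha)]
    push_cast
    ring
  unfold Kc Pc
  rw [Qc_ofReal n ha]
  trans ((((2*π:ℝ)^(-(n:ℝ)/2))^3 * (2*π/a)^((n:ℝ)/2) : ℝ) : ℂ) * Qc n (cc a t)
  · push_cast; ring
  · rw [hreal]; push_cast; ring

lemma key_identity (n : ℕ) {p a : ℝ} (hp : 1 < p) (ha : 0 < a) (x : Rn n) (t : ℝ) :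
    (((1 + (a * t) ^ 2) ^ ((n : ℝ) * (p - 1) / 4) : ℝ) : ℂ) *
      Complex.exp (Complex.I * ((t / 2 : ℝ) : ℂ) * ((‖x‖ ^ 2 : ℝ) : ℂ)) *
      FT n (nlin p (Ugrp n t (gauss n a))) x
    = ((a ^ (-(n:ℝ)/2) : ℝ) : ℂ) *
      ((((2*π) ^ (-(n:ℝ)) : ℝ) : ℂ) * (Qc n (cc a t) * Qc n (bb p a t))) *
      Complex.exp (Complex.I * ((t / 2 : ℝ) : ℂ) * ((‖x‖^2:ℝ):ℂ)
        - ((‖x‖^2:ℝ):ℂ) / (2 * bb p a t)) := by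
  rw [FT_nlin n hp ha t x]
  rw [show Complex.exp (Complex.I * ((t / 2 : ℝ) : ℂ) * ((‖x‖^2:ℝ):ℂ)
        - ((‖x‖^2:ℝ):ℂ) / (2 * bb p a t))
      = Complex.exp (Complex.I * ((t / 2 : ℝ) : ℂ) * ((‖x‖^2:ℝ):ℂ)) *
        Complex.exp (-(((‖x‖^2:ℝ):ℂ) / (2 * bb p a t))) from by
    rw [sub_eq_add_neg, Complex.exp_add]]
  have hR : (((1 + (a*t)^2) ^ ((n:ℝ)*(p-1)/4) : ℝ) : ℂ) * ((‖Kc n a t‖ ^ (p-1) : ℝ) : ℂ)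
      = 1 := by
    rw [← Complex.ofReal_mul, R_mul_normKc ha t, Complex.ofReal_one]
  calc (((1 + (a * t) ^ 2) ^ ((n : ℝ) * (p - 1) / 4) : ℝ) : ℂ) *
        Complex.exp (Complex.I * ((t / 2 : ℝ) : ℂ) * ((‖x‖ ^ 2 : ℝ) : ℂ)) *
        (((‖Kc n a t‖ ^ (p - 1) : ℝ) : ℂ) * Kc n a t *
          (Pc n * Qc n (bb p a t) * Complex.exp (-((‖x‖ ^ 2 : ℝ) : ℂ) / (2 * bb p a t))))
      = ((((1 + (a*t)^2) ^ ((n:ℝ)*(p-1)/4) : ℝ) : ℂ) * ((‖Kc n a t‖ ^ (p-1) : ℝ) : ℂ)) *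
          ((Kc n a t * Pc n) * Qc n (bb p a t)) *
          (Complex.exp (Complex.I * ((t / 2 : ℝ) : ℂ) * ((‖x‖ ^ 2 : ℝ) : ℂ)) *
            Complex.exp (-((‖x‖ ^ 2 : ℝ) : ℂ) / (2 * bb p a t))) := by ring
    _ = _ := by
        rw [hR, one_mul, Kc_mul_Pc n ha t]
        rw [show -((‖x‖^2:ℝ):ℂ) / (2 * bb p a t) = -(((‖x‖^2:ℝ):ℂ) / (2 * bb p a t)) from by
          ring]
        ring

lemma tendsto_abs_cc {a : ℝ} : Tendsto (fun t => ‖cc a t‖) atTop atTop := by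
  refine tendsto_atTop_mono (fun t => ?_) tendsto_id
  calc (id t : ℝ) ≤ |t| := le_abs_self t
    _ = |(cc a t).im| := by rw [cc_im]
    _ ≤ ‖cc a t‖ := Complex.abs_im_le_norm _

lemma tendsto_cc_inv {a : ℝ} : Tendsto (fun t => (cc a t)⁻¹) atTop (𝓝 0) := by
  rw [tendsto_zero_iff_norm_tendsto_zero]
  have h : ∀ t : ℝ, ‖(cc a t)⁻¹‖ = (‖cc a t‖)⁻¹ := fun t => by
    rw [norm_inv]
  simp_rw [h]
  exact tendsto_abs_cc.inv_tendsto_atTop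

lemma tendsto_t_cc_inv {a : ℝ} (ha : 0 < a) :
    Tendsto (fun t : ℝ => (t : ℂ) * (cc a t)⁻¹) atTop (𝓝 (-Complex.I)) := by
  have h0 : Tendsto (fun t : ℝ => ((a * t)⁻¹ : ℝ)) atTop (𝓝 0) :=
    tendsto_inv_atTop_zero.comp (tendsto_id.const_mul_atTop ha)
  have h1 : Tendsto (fun t : ℝ => ((((a * t)⁻¹ : ℝ) : ℂ) + Complex.I)) atTop
      (𝓝 (0 + Complex.I)) :=
    ((Complex.continuous_ofReal.tendsto 0).comp h0).add tendsto_const_nhds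
  rw [zero_add] at h1
  have h2 : Tendsto (fun t : ℝ => ((((a * t)⁻¹ : ℝ) : ℂ) + Complex.I)⁻¹) atTop
      (𝓝 (Complex.I⁻¹)) := h1.inv₀ Complex.I_ne_zero
  rw [Complex.inv_I] at h2
  refine h2.congr' ?_
  filter_upwards [eventually_gt_atTop 0] with t ht
  have hcne := cc_ne ha t
  have htne : (t : ℂ) ≠ 0 := by exact_mod_cast ne_of_gt ht
  have key : ((t : ℂ) * (cc a t)⁻¹)⁻¹ = (((a * t)⁻¹ : ℝ) : ℂ) + Complex.I := by
    rw [mul_inv, inv_inv]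
    have hane : (a:ℂ) ≠ 0 := by exact_mod_cast ne_of_gt ha
    unfold cc
    push_cast
    field_simp
  rw [← key, inv_inv]

lemma rho_cc {a : ℝ} (ha : 0 < a) (t : ℝ) :
    (((((cc a t)⁻¹).re : ℝ)) : ℂ) * cc a t
      = ((a⁻¹ : ℝ) : ℂ) * (starRingEnd ℂ) ((cc a t)⁻¹) := by
  have hcne := cc_ne ha t
  have hne : (starRingEnd ℂ) (cc a t) ≠ 0 := by
    simpa using hcne
  rw [map_inv₀, eq_comm, mul_inv_eq_iff_eq_mul₀ hne, mul_assoc, Complex.mul_conj,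
    cc_inv_re, normSq_cc]
  have h2 : (a⁻¹ ^ 2 + t ^ 2 : ℝ) ≠ 0 := by positivity
  rw [← Complex.ofReal_mul, div_mul_cancel₀ _ h2]

lemma cc_mul_bb {p a : ℝ} (ha : 0 < a) (t : ℝ) :
    cc a t * bb p a t
      = 1 + ((p - 1 : ℝ) : ℂ) * (((a⁻¹ : ℝ) : ℂ) * (starRingEnd ℂ) ((cc a t)⁻¹)) := by
  calc cc a t * bb p a t
      = ((p - 1 : ℝ) : ℂ) * ((((((cc a t)⁻¹).re : ℝ)) : ℂ) * cc a t) + cc a t * (cc a t)⁻¹ := by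
        unfold bb; push_cast; ring
    _ = _ := by rw [rho_cc ha t, mul_inv_cancel₀ (cc_ne ha t)]; ring

lemma tendsto_conj_cc_inv {a : ℝ} :
    Tendsto (fun t => (starRingEnd ℂ) ((cc a t)⁻¹)) atTop (𝓝 0) := by
  have := (Complex.continuous_conj.tendsto 0).comp (tendsto_cc_inv (a := a))
  simpa only [Function.comp_def, map_zero] using this

lemma tendsto_cc_mul_bb {p a : ℝ} (ha : 0 < a) :
    Tendsto (fun t => cc a t * bb p a t) atTop (𝓝 1) := by
  have h : Tendsto (fun t => 1 + ((p - 1 : ℝ) : ℂ) *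
      (((a⁻¹ : ℝ) : ℂ) * (starRingEnd ℂ) ((cc a t)⁻¹))) atTop
      (𝓝 (1 + ((p - 1 : ℝ) : ℂ) * (((a⁻¹ : ℝ) : ℂ) * 0))) :=
    tendsto_const_nhds.add ((tendsto_const_nhds.mul tendsto_conj_cc_inv).const_mul _)
  simp only [mul_zero, add_zero] at h
  exact h.congr (fun t => (cc_mul_bb ha t).symm)

lemma tendsto_conj_t_cc_inv {a : ℝ} (ha : 0 < a) :
    Tendsto (fun t : ℝ => (t:ℂ) * (starRingEnd ℂ) ((cc a t)⁻¹)) atTop (𝓝 Complex.I) := by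
  have h := (Complex.continuous_conj.tendsto (-Complex.I)).comp (tendsto_t_cc_inv ha)
  have h2 : ∀ t : ℝ, (starRingEnd ℂ) ((t:ℂ) * (cc a t)⁻¹)
      = (t:ℂ) * (starRingEnd ℂ) ((cc a t)⁻¹) := fun t => by
    rw [map_mul, Complex.conj_ofReal]
  have h3 : (starRingEnd ℂ) (-Complex.I) = Complex.I := by simp
  rw [← h3]
  exact h.congr (fun t => h2 t)

lemma E_identity {p a : ℝ} (hp : 1 < p) (ha : 0 < a) (s t : ℝ) :
    Complex.I * ((t/2 : ℝ) : ℂ) * ((s:ℝ):ℂ) - ((s:ℝ):ℂ) / (2 * bb p a t)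
      = (((s:ℝ):ℂ)/2) * (((-(((a⁻¹:ℝ):ℂ)) + ((p-1:ℝ):ℂ) * ((a⁻¹:ℝ):ℂ) *
          (Complex.I * ((t:ℂ) * (starRingEnd ℂ) ((cc a t)⁻¹)))) *
            (cc a t * bb p a t)⁻¹)) := by
  have hcne := cc_ne ha t
  have hbne := bb_ne hp ha t
  have hN : -(((a⁻¹:ℝ):ℂ)) + ((p-1:ℝ):ℂ) * ((a⁻¹:ℝ):ℂ) *
        (Complex.I * ((t:ℂ) * (starRingEnd ℂ) ((cc a t)⁻¹)))
      = Complex.I * (t:ℂ) * (cc a t * bb p a t) - cc a t := by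
    rw [cc_mul_bb ha t]
    unfold cc
    push_cast
    ring
  rw [hN]
  push_cast
  field_simp

lemma re_two_pi_div_pos {z : ℂ} (hz : 0 < z.re) : 0 < (2*(π:ℂ)/z).re := by
  have hz0 : z ≠ 0 := fun h => by simp [h] at hz
  rw [div_eq_mul_inv, show (2*(π:ℂ)) = ((2*π:ℝ):ℂ) from by push_cast; ring,
    Complex.re_ofReal_mul]
  exact mul_pos Real.two_pi_pos
    (by rw [Complex.inv_re]; exact div_pos hz (Complex.normSq_pos.2 hz0))

lemma QQ_eq (n : ℕ) {p a : ℝ} (hp : 1 < p) (ha : 0 < a) (t : ℝ) :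
    Qc n (cc a t) * Qc n (bb p a t)
      = ((2*(π:ℂ)*(2*(π:ℂ))) * (cc a t * bb p a t)⁻¹) ^ ((n:ℂ)/2) := by
  unfold Qc
  rw [← mul_cpow_of_re_pos (re_two_pi_div_pos (cc_re_pos ha t))
      (re_two_pi_div_pos (bb_re_pos hp ha t))]
  congr 1
  rw [div_mul_div_comm, div_eq_mul_inv]

lemma tendsto_QQ (n : ℕ) {p a : ℝ} (hp : 1 < p) (ha : 0 < a) :
    Tendsto (fun t => Qc n (cc a t) * Qc n (bb p a t)) atTop
      (𝓝 (((2*(π:ℂ))*(2*(π:ℂ))) ^ ((n:ℂ)/2))) := by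
  have hbase : Tendsto (fun t => (2*(π:ℂ)*(2*(π:ℂ))) * (cc a t * bb p a t)⁻¹) atTop
      (𝓝 ((2*(π:ℂ)*(2*(π:ℂ))) * 1)) := by
    have h1 := (tendsto_cc_mul_bb (p := p) ha).inv₀ one_ne_zero
    rw [inv_one] at h1
    exact h1.const_mul _
  rw [mul_one] at hbase
  have hslit : ((2*(π:ℂ))*(2*(π:ℂ))) ∈ Complex.slitPlane := by
    rw [Complex.mem_slitPlane_iff]
    left
    rw [show (2*(π:ℂ))*(2*(π:ℂ)) = (((2*π)*(2*π):ℝ):ℂ) from by push_cast; ring,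
      Complex.ofReal_re]
    positivity
  have hcont := hbase.cpow (tendsto_const_nhds (x := ((n:ℂ)/2))) hslit
  exact hcont.congr (fun t => (QQ_eq n hp ha t).symm)

lemma D_value (n : ℕ) :
    (((2*π) ^ (-(n:ℝ)) : ℝ) : ℂ) * ((2*(π:ℂ))*(2*(π:ℂ))) ^ ((n:ℂ)/2) = 1 := by
  have h2π := Real.two_pi_pos
  rw [show ((2*(π:ℂ))*(2*(π:ℂ))) = (((2*π)*(2*π):ℝ):ℂ) from by push_cast; ring,
    show ((n:ℂ)/2) = (((n:ℝ)/2 : ℝ):ℂ) from by push_cast; ring,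
    ← Complex.ofReal_cpow (by positivity), ← Complex.ofReal_mul]
  rw [show ((2*π)^(-(n:ℝ)) * (((2*π)*(2*π))^((n:ℝ)/2)) : ℝ) = 1 from ?_, Complex.ofReal_one]
  rw [Real.rpow_def_of_pos h2π, Real.rpow_def_of_pos (by positivity), ← Real.exp_add,
    Real.log_mul h2π.ne' h2π.ne']
  rw [show Real.log (2*π) * (-(n:ℝ)) + (Real.log (2*π) + Real.log (2*π)) * ((n:ℝ)/2) = 0
    from by ring, Real.exp_zero]

end Aux


/-- **Large-time asymptotics**: for `a > 0`, `p > 1` and every `x`, as `t → +∞`,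
`(1+(at)²)^{n(p-1)/4} e^{i(t/2)|x|²} 𝓕(|U(t)g_a|^{p-1}U(t)g_a)(x) → a^{-n/2} e^{-p|x|²/(2a)}`. -/
theorem gaussian_large_time_asymptotics (n : ℕ) (hn : 1 ≤ n) (p : ℝ) (hp : 1 < p)
    (a : ℝ) (ha : 0 < a) (x : Rn n) :
    Tendsto
      (fun t : ℝ =>
        (((1 + (a * t) ^ 2) ^ ((n : ℝ) * (p - 1) / 4) : ℝ) : ℂ) *
          Complex.exp (Complex.I * ((t / 2 : ℝ) : ℂ) * ((‖x‖ ^ 2 : ℝ) : ℂ)) *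
          FT n (nlin p (Ugrp n t (gauss n a))) x)
      atTop
      (𝓝 (((a ^ (-(n : ℝ) / 2) : ℝ) : ℂ) *
        Complex.exp (-((p * ‖x‖ ^ 2 / (2 * a) : ℝ) : ℂ)))) := by
  have hane : (a:ℂ) ≠ 0 := by exact_mod_cast ne_of_gt ha
  have hEF : Tendsto (fun t : ℝ =>
      ((((‖x‖^2 : ℝ):ℂ))/2) * (((-(((a⁻¹:ℝ):ℂ)) + ((p-1:ℝ):ℂ) * ((a⁻¹:ℝ):ℂ) *
        (Complex.I * ((t:ℂ) * (starRingEnd ℂ) ((cc a t)⁻¹)))) * (cc a t * bb p a t)⁻¹)))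
      atTop (𝓝 (((((‖x‖^2 : ℝ):ℂ))/2) * (((-(((a⁻¹:ℝ):ℂ)) + ((p-1:ℝ):ℂ) * ((a⁻¹:ℝ):ℂ) *
        (Complex.I * Complex.I)) * ((1:ℂ))⁻¹)))) := by
    apply Tendsto.const_mul
    apply Tendsto.mul
    · exact tendsto_const_nhds.add
        (((tendsto_conj_t_cc_inv ha).const_mul Complex.I).const_mul _)
    · exact (tendsto_cc_mul_bb ha).inv₀ one_ne_zero
  have hval : ((((‖x‖^2 : ℝ):ℂ))/2) * (((-(((a⁻¹:ℝ):ℂ)) + ((p-1:ℝ):ℂ) * ((a⁻¹:ℝ):ℂ) *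
        (Complex.I * Complex.I)) * ((1:ℂ))⁻¹)) = -((p * ‖x‖ ^ 2 / (2 * a) : ℝ) : ℂ) := by
    rw [Complex.I_mul_I]
    push_cast
    field_simp
    ring
  have hE : Tendsto (fun t : ℝ => Complex.exp (Complex.I * ((t/2:ℝ):ℂ) * ((‖x‖^2:ℝ):ℂ)
      - ((‖x‖^2:ℝ):ℂ)/(2 * bb p a t))) atTop
      (𝓝 (Complex.exp (-((p * ‖x‖ ^ 2 / (2 * a) : ℝ) : ℂ)))) := by
    have h1 := hEF.cexp
    rw [hval] at h1
    exact h1.congr (fun t => congrArg Complex.exp (E_identity hp ha (‖x‖^2) t).symm)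
  have hD : Tendsto (fun t : ℝ => (((2*π) ^ (-(n:ℝ)) : ℝ):ℂ) *
      (Qc n (cc a t) * Qc n (bb p a t))) atTop (𝓝 1) := by
    have h2 := (tendsto_QQ n hp ha).const_mul ((((2*π) ^ (-(n:ℝ)) : ℝ):ℂ))
    rwa [D_value n] at h2
  refine Tendsto.congr (fun t => (key_identity n hp ha x t).symm) ?_
  have hmain := (hD.const_mul (((a ^ (-(n:ℝ)/2) : ℝ):ℂ))).mul hE
  simpa using hmain
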